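/- The normalized information distance d_I(X,Y) = max(H(X|Y),H(Y|X))/max(H(X),H(Y)) satisfies the triangle inequality d_I(X,Y) ≤ d_I(X,Z) + d_I(Z,Y), provided max(H(X),H(Y)), max(H(X),H(Z)), max(H(Y),H(Z)) are positive. -/

import Mathlib

open Real

/-- Shannon entropy of a discrete random variable `X` on a finite probability
space with weights `p`. -/
noncomputable def ent {Ω S : Type*} [Fintype Ω] [Fintype S] [DecidableEq S]
    (p : Ω → ℝ) (X : Ω → S) : ℝ :=
  ∑ s : S, Real.negMulLog (∑ ω ∈ Finset.univ.filter (fun ω => X ω = s), p ω)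

/-- Conditional entropy `H(X|Y) = H(X,Y) - H(Y)`. -/
noncomputable def condEnt {Ω S T : Type*} [Fintype Ω] [Fintype S] [Fintype T]
    [DecidableEq S] [DecidableEq T] (p : Ω → ℝ) (X : Ω → S) (Y : Ω → T) : ℝ :=
  ent p (fun ω => (X ω, Y ω)) - ent p Y

/-- Mutual information `I(X;Y) = H(X) + H(Y) - H(X,Y)`. -/
noncomputable def mutualInfo {Ω S T : Type*} [Fintype Ω] [Fintype S] [Fintype T]
    [DecidableEq S] [DecidableEq T] (p : Ω → ℝ) (X : Ω → S) (Y : Ω → T) : ℝ :=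
  ent p X + ent p Y - ent p (fun ω => (X ω, Y ω))

namespace NIDAux

/-- pushforward weight -/
noncomputable def pm {Ω S : Type*} [Fintype Ω] [DecidableEq S]
    (p : Ω → ℝ) (X : Ω → S) (s : S) : ℝ :=
  ∑ ω ∈ Finset.univ.filter (fun ω => X ω = s), p ω

lemma ent_eq {Ω S : Type*} [Fintype Ω] [Fintype S] [DecidableEq S]
    (p : Ω → ℝ) (X : Ω → S) : ent p X = ∑ s : S, Real.negMulLog (pm p X s) := rfl

lemma pm_nonneg {Ω S : Type*} [Fintype Ω] [DecidableEq S]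
    {p : Ω → ℝ} (hp0 : ∀ ω, 0 ≤ p ω) (X : Ω → S) (s : S) : 0 ≤ pm p X s :=
  Finset.sum_nonneg fun ω _ => hp0 ω

lemma pm_le_one {Ω S : Type*} [Fintype Ω] [DecidableEq S]
    {p : Ω → ℝ} (hp0 : ∀ ω, 0 ≤ p ω) (hp1 : ∑ ω, p ω = 1) (X : Ω → S) (s : S) :
    pm p X s ≤ 1 := by
  rw [← hp1]
  exact Finset.sum_le_sum_of_subset_of_nonneg (Finset.subset_univ _)
    (fun ω _ _ => hp0 ω)

lemma ent_nonneg {Ω S : Type*} [Fintype Ω] [Fintype S] [DecidableEq S]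
    {p : Ω → ℝ} (hp0 : ∀ ω, 0 ≤ p ω) (hp1 : ∑ ω, p ω = 1) (X : Ω → S) :
    0 ≤ ent p X := by
  rw [ent_eq]
  exact Finset.sum_nonneg fun s _ =>
    Real.negMulLog_nonneg (pm_nonneg hp0 X s) (pm_le_one hp0 hp1 X s)

lemma negMulLog_sum_le {ι : Type*} (F : Finset ι) (a : ι → ℝ) (ha : ∀ i ∈ F, 0 ≤ a i) :
    Real.negMulLog (∑ i ∈ F, a i) ≤ ∑ i ∈ F, Real.negMulLog (a i) := by
  have hS : Real.negMulLog (∑ i ∈ F, a i) = ∑ i ∈ F, (-(a i) * Real.log (∑ j ∈ F, a j)) := by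
    rw [Real.negMulLog, ← Finset.sum_mul, ← Finset.sum_neg_distrib]
  rw [hS]
  apply Finset.sum_le_sum
  intro i hi
  rcases eq_or_lt_of_le (ha i hi) with h0 | h0
  · simp [Real.negMulLog, ← h0]
  · rw [Real.negMulLog, neg_mul, neg_mul, neg_le_neg_iff]
    apply mul_le_mul_of_nonneg_left _ (le_of_lt h0)
    exact Real.log_le_log h0 (Finset.single_le_sum ha hi)

lemma subadd_mass {S T : Type*} [Fintype S] [Fintype T] (r : S → T → ℝ)
    (hr : ∀ s t, 0 ≤ r s t) :
    (∑ s, ∑ t, Real.negMulLog (r s t)) + Real.negMulLog (∑ s, ∑ t, r s t)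
      ≤ (∑ s, Real.negMulLog (∑ t, r s t)) + ∑ t, Real.negMulLog (∑ s, r s t) := by
  set m : S → ℝ := fun s => ∑ t, r s t with hm
  set n : T → ℝ := fun t => ∑ s, r s t with hn
  set M : ℝ := ∑ s, ∑ t, r s t with hM
  have hm0 : ∀ s, 0 ≤ m s := fun s => Finset.sum_nonneg fun t _ => hr s t
  have hn0 : ∀ t, 0 ≤ n t := fun t => Finset.sum_nonneg fun s _ => hr s t
  have hM0 : 0 ≤ M := Finset.sum_nonneg fun s _ => hm0 s
  have hMn : M = ∑ t, n t := by rw [hM]; exact Finset.sum_comm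
  have hMm : ∑ s, m s = M := rfl
  rcases eq_or_lt_of_le hM0 with h0 | hMpos
  · have hz : ∀ s t, r s t = 0 := by
      intro s t
      have h1 : ∀ s ∈ (Finset.univ : Finset S), m s = 0 :=
        (Finset.sum_eq_zero_iff_of_nonneg (fun s _ => hm0 s)).1 h0.symm
      have h2 : ∀ t ∈ (Finset.univ : Finset T), r s t = 0 :=
        (Finset.sum_eq_zero_iff_of_nonneg (fun t _ => hr s t)).1 (h1 s (Finset.mem_univ s))
      exact h2 t (Finset.mem_univ t)
    simp [hz, ← h0, hm, hn]
  · have e1 : (∑ s, Real.negMulLog (m s)) = ∑ s, ∑ t, (-(r s t) * Real.log (m s)) := by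
      refine Finset.sum_congr rfl fun s _ => ?_
      rw [Real.negMulLog, ← Finset.sum_neg_distrib, ← Finset.sum_mul]
    have e2 : (∑ t, Real.negMulLog (n t)) = ∑ s, ∑ t, (-(r s t) * Real.log (n t)) := by
      rw [Finset.sum_comm]
      refine Finset.sum_congr rfl fun t _ => ?_
      rw [Real.negMulLog, ← Finset.sum_neg_distrib, ← Finset.sum_mul]
    have e3 : Real.negMulLog M = ∑ s, ∑ t, (-(r s t) * Real.log M) := by
      have h : M * Real.log M = ∑ s, ∑ t, (r s t * Real.log M) := by
        nth_rewrite 1 [hM]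
        rw [Finset.sum_mul]
        exact Finset.sum_congr rfl fun s _ => Finset.sum_mul _ _ _
      simp only [Real.negMulLog, neg_mul, Finset.sum_neg_distrib, neg_inj]
      exact h
    have key : ∀ s t, r s t - m s * n t / M ≤
        (-(r s t) * Real.log (m s) + -(r s t) * Real.log (n t))
          - (Real.negMulLog (r s t) + -(r s t) * Real.log M) := by
      intro s t
      rcases eq_or_lt_of_le (hr s t) with h0 | hrpos
      · have hr0 : r s t = 0 := h0.symm
        rw [hr0]
        simp [Real.negMulLog]
        nlinarith [div_nonneg (mul_nonneg (hm0 s) (hn0 t)) hM0]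
      · have hms : 0 < m s := lt_of_lt_of_le hrpos
          (Finset.single_le_sum (fun t _ => hr s t) (Finset.mem_univ t))
        have hnt : 0 < n t := lt_of_lt_of_le hrpos
          (Finset.single_le_sum (fun s _ => hr s t) (Finset.mem_univ s))
        have hx : 0 < m s * n t / (r s t * M) := by positivity
        have hlog := Real.log_le_sub_one_of_pos hx
        rw [Real.log_div (by positivity) (by positivity), Real.log_mul (ne_of_gt hms)
          (ne_of_gt hnt), Real.log_mul (ne_of_gt hrpos) (ne_of_gt hMpos)] at hlog
        have hxval : r s t * (m s * n t / (r s t * M)) = m s * n t / M := by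
          field_simp
        rw [Real.negMulLog]
        nlinarith [mul_le_mul_of_nonneg_left hlog (le_of_lt hrpos)]
    have sum_eq : ∑ s, ∑ t, (r s t - m s * n t / M) = 0 := by
      have hprod : ∑ s, ∑ t, (m s * n t / M) = (∑ s, m s) * (∑ t, n t) / M := by
        rw [Finset.sum_mul_sum, Finset.sum_div]
        exact Finset.sum_congr rfl fun s _ => (Finset.sum_div _ _ _).symm
      have hMM : (∑ s, m s) * (∑ t, n t) / M = M := by
        rw [hMm, ← hMn, mul_div_assoc, div_self (ne_of_gt hMpos), mul_one]
      simp only [Finset.sum_sub_distrib, hprod, hMM, ← hM, sub_self]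
    have final : (0:ℝ) ≤ ∑ s, ∑ t, ((-(r s t) * Real.log (m s) + -(r s t) * Real.log (n t))
          - (Real.negMulLog (r s t) + -(r s t) * Real.log M)) := by
      rw [← sum_eq]
      exact Finset.sum_le_sum fun s _ => Finset.sum_le_sum fun t _ => key s t
    simp only [Finset.sum_sub_distrib, Finset.sum_add_distrib] at final
    rw [e1, e2, e3]
    linarith [final]

lemma core_submod {S T U : Type*} [Fintype S] [Fintype T] [Fintype U] (q : S → T → U → ℝ)
    (hq : ∀ s t u, 0 ≤ q s t u) :
    (∑ s, ∑ t, Real.negMulLog (∑ u, q s t u)) + ∑ u, Real.negMulLog (∑ s, ∑ t, q s t u)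
      ≤ (∑ s, ∑ u, Real.negMulLog (∑ t, q s t u))
        + ∑ t, ∑ u, Real.negMulLog (∑ s, q s t u) := by
  have step1 : (∑ s, ∑ t, Real.negMulLog (∑ u, q s t u))
      ≤ ∑ u, ∑ s, ∑ t, Real.negMulLog (q s t u) := by
    have h : (∑ s, ∑ t, Real.negMulLog (∑ u, q s t u))
        ≤ ∑ s, ∑ t, ∑ u, Real.negMulLog (q s t u) :=
      Finset.sum_le_sum fun s _ => Finset.sum_le_sum fun t _ =>
        negMulLog_sum_le _ _ fun u _ => hq s t u
    have e : (∑ s, ∑ t, ∑ u, Real.negMulLog (q s t u))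
        = ∑ u, ∑ s, ∑ t, Real.negMulLog (q s t u) := by
      calc (∑ s, ∑ t, ∑ u, Real.negMulLog (q s t u))
          = ∑ s, ∑ u, ∑ t, Real.negMulLog (q s t u) :=
            Finset.sum_congr rfl fun s _ => Finset.sum_comm
        _ = ∑ u, ∑ s, ∑ t, Real.negMulLog (q s t u) := Finset.sum_comm
    rw [← e]; exact h
  have step2' : (∑ u, ∑ s, ∑ t, Real.negMulLog (q s t u))
      + ∑ u, Real.negMulLog (∑ s, ∑ t, q s t u)
      ≤ (∑ u, ∑ s, Real.negMulLog (∑ t, q s t u))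
        + ∑ u, ∑ t, Real.negMulLog (∑ s, q s t u) := by
    rw [← Finset.sum_add_distrib, ← Finset.sum_add_distrib]
    exact Finset.sum_le_sum fun u _ =>
      subadd_mass (fun s t => q s t u) (fun s t => hq s t u)
  have e1 : (∑ u, ∑ s, Real.negMulLog (∑ t, q s t u))
      = ∑ s, ∑ u, Real.negMulLog (∑ t, q s t u) := Finset.sum_comm
  have e2 : (∑ u, ∑ t, Real.negMulLog (∑ s, q s t u))
      = ∑ t, ∑ u, Real.negMulLog (∑ s, q s t u) := Finset.sum_comm
  linarith [step1, step2', e1.le, e2.ge]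

lemma ent_comp_inj {Ω S T : Type*} [Fintype Ω] [Fintype S] [Fintype T]
    [DecidableEq S] [DecidableEq T]
    (p : Ω → ℝ) (W : Ω → S) (f : S → T) (hf : Function.Injective f) :
    ent p (fun ω => f (W ω)) = ent p W := by
  have hpm : ∀ s, pm p (fun ω => f (W ω)) (f s) = pm p W s := by
    intro s
    apply Finset.sum_congr _ fun _ _ => rfl
    apply Finset.filter_congr
    intro ω _
    exact ⟨fun h => hf h, fun h => congrArg f h⟩
  have hzero : ∀ t ∈ (Finset.univ : Finset T), t ∉ Finset.univ.image f →
      Real.negMulLog (pm p (fun ω => f (W ω)) t) = 0 := by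
    intro t _ ht
    have hemp : Finset.univ.filter (fun ω => f (W ω) = t) = ∅ := by
      apply Finset.filter_eq_empty_iff.2
      intro ω _ h
      exact ht (Finset.mem_image.2 ⟨W ω, Finset.mem_univ _, h⟩)
    have : pm p (fun ω => f (W ω)) t = 0 := by
      rw [pm, hemp, Finset.sum_empty]
    rw [this, Real.negMulLog_zero]
  rw [ent_eq, ent_eq,
    ← Finset.sum_subset (Finset.subset_univ (Finset.univ.image f)) hzero,
    Finset.sum_image (fun a _ b _ h => hf h)]
  exact Finset.sum_congr rfl fun s _ => by rw [hpm s]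

lemma ent_pair_swap {Ω S T : Type*} [Fintype Ω] [Fintype S] [Fintype T]
    [DecidableEq S] [DecidableEq T] (p : Ω → ℝ) (X : Ω → S) (Y : Ω → T) :
    ent p (fun ω => (Y ω, X ω)) = ent p (fun ω => (X ω, Y ω)) :=
  ent_comp_inj p (fun ω => (X ω, Y ω)) Prod.swap Prod.swap_injective

lemma ent_unit_pair {Ω T : Type*} [Fintype Ω] [Fintype T] [DecidableEq T]
    (p : Ω → ℝ) (Y : Ω → T) :
    ent p (fun ω => ((() : Unit), Y ω)) = ent p Y :=
  ent_comp_inj p Y (fun t => ((), t)) (fun a b h => by simpa using h)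

lemma ent_pair_unit {Ω T : Type*} [Fintype Ω] [Fintype T] [DecidableEq T]
    (p : Ω → ℝ) (Y : Ω → T) :
    ent p (fun ω => (Y ω, (() : Unit))) = ent p Y :=
  ent_comp_inj p Y (fun t => (t, ())) (fun a b h => by simpa using h)

lemma ent_const_unit {Ω : Type*} [Fintype Ω] (p : Ω → ℝ) (hp1 : ∑ ω, p ω = 1) :
    ent p (fun _ => (() : Unit)) = 0 := by
  rw [ent_eq]
  rw [Fintype.sum_unique]
  have : pm p (fun _ : Ω => (() : Unit)) () = 1 := by
    rw [pm, ← hp1]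
    apply Finset.sum_congr _ fun _ _ => rfl
    simp
  rw [this, Real.negMulLog_one]

/-- the submodularity-type inequality `H(X,Y) + H(Z) ≤ H(X,Z) + H(Y,Z)`. -/
lemma star {Ω S T U : Type*} [Fintype Ω] [Fintype S] [Fintype T] [Fintype U]
    [DecidableEq S] [DecidableEq T] [DecidableEq U]
    (p : Ω → ℝ) (hp0 : ∀ ω, 0 ≤ p ω) (X : Ω → S) (Y : Ω → T) (Z : Ω → U) :
    ent p (fun ω => (X ω, Y ω)) + ent p Z
      ≤ ent p (fun ω => (X ω, Z ω)) + ent p (fun ω => (Y ω, Z ω)) := by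
  classical
  set q : S → T → U → ℝ := fun s t u =>
    ∑ ω ∈ Finset.univ.filter (fun ω => X ω = s ∧ Y ω = t ∧ Z ω = u), p ω with hq_def
  have hq : ∀ s t u, 0 ≤ q s t u := fun s t u => Finset.sum_nonneg fun ω _ => hp0 ω
  have m1 : ∀ s t, pm p (fun ω => (X ω, Y ω)) (s, t) = ∑ u, q s t u := by
    intro s t
    have h1 : pm p (fun ω => (X ω, Y ω)) (s, t)
        = ∑ ω ∈ Finset.univ.filter (fun ω => X ω = s ∧ Y ω = t), p ω := by
      apply Finset.sum_congr _ fun _ _ => rfl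
      apply Finset.filter_congr
      intro ω _
      simp [Prod.ext_iff]
    rw [h1, ← Finset.sum_fiberwise _ Z p]
    refine Finset.sum_congr rfl fun u _ => ?_
    rw [Finset.filter_filter]
    apply Finset.sum_congr _ fun _ _ => rfl
    apply Finset.filter_congr
    intro ω _
    tauto
  have m2 : ∀ u, pm p Z u = ∑ s, ∑ t, q s t u := by
    intro u
    rw [pm, ← Finset.sum_fiberwise _ X p]
    refine Finset.sum_congr rfl fun s _ => ?_
    rw [Finset.filter_filter, ← Finset.sum_fiberwise _ Y p]
    refine Finset.sum_congr rfl fun t _ => ?_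
    rw [Finset.filter_filter]
    apply Finset.sum_congr _ fun _ _ => rfl
    apply Finset.filter_congr
    intro ω _
    tauto
  have m3 : ∀ s u, pm p (fun ω => (X ω, Z ω)) (s, u) = ∑ t, q s t u := by
    intro s u
    have h1 : pm p (fun ω => (X ω, Z ω)) (s, u)
        = ∑ ω ∈ Finset.univ.filter (fun ω => X ω = s ∧ Z ω = u), p ω := by
      apply Finset.sum_congr _ fun _ _ => rfl
      apply Finset.filter_congr
      intro ω _
      simp [Prod.ext_iff]
    rw [h1, ← Finset.sum_fiberwise _ Y p]
    refine Finset.sum_congr rfl fun t _ => ?_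
    rw [Finset.filter_filter]
    apply Finset.sum_congr _ fun _ _ => rfl
    apply Finset.filter_congr
    intro ω _
    tauto
  have m4 : ∀ t u, pm p (fun ω => (Y ω, Z ω)) (t, u) = ∑ s, q s t u := by
    intro t u
    have h1 : pm p (fun ω => (Y ω, Z ω)) (t, u)
        = ∑ ω ∈ Finset.univ.filter (fun ω => Y ω = t ∧ Z ω = u), p ω := by
      apply Finset.sum_congr _ fun _ _ => rfl
      apply Finset.filter_congr
      intro ω _
      simp [Prod.ext_iff]
    rw [h1, ← Finset.sum_fiberwise _ X p]
    refine Finset.sum_congr rfl fun s _ => ?_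
    rw [Finset.filter_filter]
    apply Finset.sum_congr _ fun _ _ => rfl
    apply Finset.filter_congr
    intro ω _
    tauto
  have exy : ent p (fun ω => (X ω, Y ω)) = ∑ s, ∑ t, Real.negMulLog (∑ u, q s t u) := by
    rw [ent_eq, Fintype.sum_prod_type]
    exact Finset.sum_congr rfl fun s _ => Finset.sum_congr rfl fun t _ => by rw [m1]
  have ez : ent p Z = ∑ u, Real.negMulLog (∑ s, ∑ t, q s t u) := by
    rw [ent_eq]
    exact Finset.sum_congr rfl fun u _ => by rw [m2]
  have exz : ent p (fun ω => (X ω, Z ω)) = ∑ s, ∑ u, Real.negMulLog (∑ t, q s t u) := by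
    rw [ent_eq, Fintype.sum_prod_type]
    exact Finset.sum_congr rfl fun s _ => Finset.sum_congr rfl fun u _ => by rw [m3]
  have eyz : ent p (fun ω => (Y ω, Z ω)) = ∑ t, ∑ u, Real.negMulLog (∑ s, q s t u) := by
    rw [ent_eq, Fintype.sum_prod_type]
    exact Finset.sum_congr rfl fun t _ => Finset.sum_congr rfl fun u _ => by rw [m4]
  rw [exy, ez, exz, eyz]
  exact core_submod q hq

lemma ent_le_pair_left {Ω T U : Type*} [Fintype Ω] [Fintype T] [Fintype U]
    [DecidableEq T] [DecidableEq U]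
    (p : Ω → ℝ) (hp0 : ∀ ω, 0 ≤ p ω) (Y : Ω → T) (Z : Ω → U) :
    ent p Y ≤ ent p (fun ω => (Y ω, Z ω)) := by
  have h := star p hp0 (fun _ => (() : Unit)) Y Z
  rw [ent_unit_pair, ent_unit_pair] at h
  linarith

lemma ent_le_pair_right {Ω T U : Type*} [Fintype Ω] [Fintype T] [Fintype U]
    [DecidableEq T] [DecidableEq U]
    (p : Ω → ℝ) (hp0 : ∀ ω, 0 ≤ p ω) (Y : Ω → T) (Z : Ω → U) :
    ent p Z ≤ ent p (fun ω => (Y ω, Z ω)) := by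
  rw [← ent_pair_swap]
  exact ent_le_pair_left p hp0 Z Y

lemma ent_pair_le_add {Ω T U : Type*} [Fintype Ω] [Fintype T] [Fintype U]
    [DecidableEq T] [DecidableEq U]
    (p : Ω → ℝ) (hp0 : ∀ ω, 0 ≤ p ω) (hp1 : ∑ ω, p ω = 1) (Y : Ω → T) (Z : Ω → U) :
    ent p (fun ω => (Y ω, Z ω)) ≤ ent p Y + ent p Z := by
  have h := star p hp0 Y Z (fun _ => (() : Unit))
  rw [ent_pair_unit, ent_pair_unit, ent_const_unit p hp1] at h
  linarith

end NIDAux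

open NIDAux

theorem normalized_informationDistance_triangle {Ω S T U : Type*} [Fintype Ω] [Fintype S]
    [Fintype T] [Fintype U] [DecidableEq S] [DecidableEq T] [DecidableEq U]
    (p : Ω → ℝ) (hp0 : ∀ ω, 0 ≤ p ω) (hp1 : ∑ ω, p ω = 1)
    (X : Ω → S) (Y : Ω → T) (Z : Ω → U)
    (hXY : 0 < max (ent p X) (ent p Y))
    (hXZ : 0 < max (ent p X) (ent p Z))
    (hYZ : 0 < max (ent p Y) (ent p Z)) :
    max (condEnt p X Y) (condEnt p Y X) / max (ent p X) (ent p Y) ≤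
      max (condEnt p X Z) (condEnt p Z X) / max (ent p X) (ent p Z) +
        max (condEnt p Z Y) (condEnt p Y Z) / max (ent p Y) (ent p Z) := by
  classical
  set a := ent p X with ha_def
  set b := ent p Y with hb_def
  set c := ent p Z with hc_def
  set Exy := ent p (fun ω => (X ω, Y ω)) with hexy_def
  set Exz := ent p (fun ω => (X ω, Z ω)) with hexz_def
  set Eyz := ent p (fun ω => (Y ω, Z ω)) with heyz_def
  have hswap_yx : ent p (fun ω => (Y ω, X ω)) = Exy := ent_pair_swap p X Y
  have hswap_zx : ent p (fun ω => (Z ω, X ω)) = Exz := ent_pair_swap p X Z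
  have hswap_zy : ent p (fun ω => (Z ω, Y ω)) = Eyz := ent_pair_swap p Y Z
  have hstar : Exy + c ≤ Exz + Eyz := star p hp0 X Y Z
  have ha0 : 0 ≤ a := ent_nonneg hp0 hp1 X
  have hb0 : 0 ≤ b := ent_nonneg hp0 hp1 Y
  have hc0 : 0 ≤ c := ent_nonneg hp0 hp1 Z
  have haxy : a ≤ Exy := ent_le_pair_left p hp0 X Y
  have hbxy : b ≤ Exy := ent_le_pair_right p hp0 X Y
  have haxz : a ≤ Exz := ent_le_pair_left p hp0 X Z
  have hcxz : c ≤ Exz := ent_le_pair_right p hp0 X Z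
  have hbyz : b ≤ Eyz := ent_le_pair_left p hp0 Y Z
  have hcyz : c ≤ Eyz := ent_le_pair_right p hp0 Y Z
  have hsub_xy : Exy ≤ a + b := ent_pair_le_add p hp0 hp1 X Y
  -- rewrite the goal in terms of a b c Exy Exz Eyz
  have goal_eq : max (condEnt p X Y) (condEnt p Y X) = Exy - min a b := by
    rw [condEnt, condEnt, hswap_yx, ← hexy_def, ← ha_def, ← hb_def]
    rcases le_total a b with h | h
    · rw [min_eq_left h, max_eq_right (by linarith)]
    · rw [min_eq_right h, max_eq_left (by linarith)]
  have goal_eq2 : max (condEnt p X Z) (condEnt p Z X) = Exz - min a c := by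
    rw [condEnt, condEnt, hswap_zx, ← hexz_def, ← ha_def, ← hc_def]
    rcases le_total a c with h | h
    · rw [min_eq_left h, max_eq_right (by linarith)]
    · rw [min_eq_right h, max_eq_left (by linarith)]
  have goal_eq3 : max (condEnt p Z Y) (condEnt p Y Z) = Eyz - min b c := by
    rw [condEnt, condEnt, hswap_zy, ← heyz_def, ← hb_def, ← hc_def]
    rcases le_total b c with h | h
    · rw [min_eq_left h, max_eq_left (by linarith)]
    · rw [min_eq_right h, max_eq_right (by linarith)]
  rw [goal_eq, goal_eq2, goal_eq3]
  rcases le_or_gt c (max a b) with hc | hc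
  · -- Case 1 : c ≤ max a b
    have h2 : max a c ≤ max a b := max_le (le_max_left a b) hc
    have h3 : max b c ≤ max a b := max_le (le_max_right a b) hc
    have hn2 : 0 ≤ Exz - min a c := by
      have := min_le_left a c; linarith
    have hn3 : 0 ≤ Eyz - min b c := by
      have := min_le_left b c; linarith
    have hmin : min a c + min b c ≤ c + min a b := by
      rcases le_total a b with h | h <;> rcases le_total a c with h' | h' <;>
        rcases le_total b c with h'' | h'' <;>
        simp only [min_def] <;> split_ifs <;> linarith
    have hnum : Exy - min a b ≤ (Exz - min a c) + (Eyz - min b c) := by linarith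
    calc (Exy - min a b) / max a b
        ≤ ((Exz - min a c) + (Eyz - min b c)) / max a b := by
          exact div_le_div_of_nonneg_right hnum hXY.le
      _ = (Exz - min a c) / max a b + (Eyz - min b c) / max a b := add_div _ _ _
      _ ≤ (Exz - min a c) / max a c + (Eyz - min b c) / max b c := by
          gcongr
  · -- Case 2 : max a b < c
    have hac : max a c = c := max_eq_right (le_of_lt (lt_of_le_of_lt (le_max_left a b) hc))
    have hbc : max b c = c := max_eq_right (le_of_lt (lt_of_le_of_lt (le_max_right a b) hc))
    have hmina : min a c = a := min_eq_left (le_of_lt (lt_of_le_of_lt (le_max_left a b) hc))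
    have hminb : min b c = b := min_eq_left (le_of_lt (lt_of_le_of_lt (le_max_right a b) hc))
    rw [hac, hbc, hmina, hminb]
    set m := max a b with hm_def
    have hcpos : 0 < c := lt_trans hXY hc
    have hI1 : 0 ≤ a + b - Exy := by linarith
    have hminmax : min a b + m = a + b := min_add_max a b
    have e1 : (Exy - min a b) / m = 1 - (a + b - Exy) / m := by
      have : Exy - min a b = m - (a + b - Exy) := by linarith
      rw [this, sub_div, div_self (ne_of_gt hXY)]
    rw [e1]
    calc 1 - (a + b - Exy) / m
        ≤ 1 - (a + b - Exy) / c := by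
          have : (a + b - Exy) / c ≤ (a + b - Exy) / m := by
            gcongr
          linarith
      _ = (c - (a + b - Exy)) / c := by
          have h : (c - (a + b - Exy)) / c = 1 - (a + b - Exy) / c := by
            rw [sub_div, div_self (ne_of_gt hcpos)]
          rw [h]
      _ ≤ ((Exz - a) + (Eyz - b)) / c := by
          gcongr
          linarith
      _ = (Exz - a) / c + (Eyz - b) / c := add_div _ _ _
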